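/- Under the signal-model setup, if user u has interacted with both item i and item j (R_{ui} = 1 and R_{uj} = 1), then (1/2)(d²_W(p_u, q_i) − d²_W(p_u, q_j)) = −(y_{ui} − y_{uj}) − ω (d_i^{−2t} − d_j^{−2t}); in particular, when t = 0 this bias term vanishes and half the distance residual equals the negated preference residual. -/

import Mathlib

open Matrix Finset

theorem signal_model_residual_both_interacted
    (m n : ℕ) (R : Matrix (Fin m) (Fin n) ℝ)
    (hR01 : ∀ u i, R u i = 0 ∨ R u i = 1)
    (d : Fin n → ℝ) (hd : d = fun i => ∑ u, R u i) (hdpos : ∀ i, 0 < d i)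
    (t : ℝ)
    (H : Matrix (Fin n) (Fin n) ℝ) (hHsymm : H.IsSymm) (hHhollow : ∀ i, H i i = 0)
    (ω : ℝ) (hω : 0 < ω)
    (W : Matrix (Fin n) (Fin n) ℝ)
    (hW : W = H + ω • Matrix.diagonal fun i => d i ^ (-(2 * t)))
    (p : Fin m → Fin n → ℝ) (hp : p = fun u k => d k ^ (-t) * R u k)
    (q : Fin n → Fin n → ℝ) (hq : q = fun i => d i ^ t • (Pi.single i 1 : Fin n → ℝ))
    (dsq : (Fin n → ℝ) → (Fin n → ℝ) → ℝ)
    (hdsq : dsq = fun x z => (x - z) ⬝ᵥ W.mulVec (x - z))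
    (y : Fin m → Fin n → ℝ) (hy : y = fun u i => p u ⬝ᵥ H.mulVec (q i))
    (u : Fin m) (i j : Fin n)

    (hui : R u i = 1) (huj : R u j = 1) :
    (1 / 2) * (dsq (p u) (q i) - dsq (p u) (q j)) =
      -(y u i - y u j) - ω * (d i ^ (-(2 * t)) - d j ^ (-(2 * t))) ∧
    (t = 0 → (1 / 2) * (dsq (p u) (q i) - dsq (p u) (q j)) = -(y u i - y u j)) := by
  -- cross terms
  have hWsymm : W.IsSymm := by
    rw [hW, Matrix.IsSymm, Matrix.transpose_add, hHsymm, Matrix.transpose_smul,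
      Matrix.diagonal_transpose]
  have cross : ∀ k : Fin n, R u k = 1 →
      p u ⬝ᵥ W.mulVec (q k) = y u k + ω * d k ^ (-(2 * t)) := by
    intro k hk
    have hdk : (0:ℝ) < d k := hdpos k
    rw [hW, hy]
    simp only [Matrix.add_mulVec, Matrix.smul_mulVec, dotProduct_add, dotProduct_smul,
      smul_eq_mul]
    congr 1
    rw [hq]
    simp only [Matrix.mulVec_smul, Matrix.diagonal_mulVec_single, dotProduct_smul, smul_eq_mul,
      dotProduct_single, hp, hk, mul_one]
    rw [← Real.rpow_add hdk, ← Real.rpow_add hdk]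
    ring_nf
  -- diagonal terms
  have diag : ∀ k : Fin n, q k ⬝ᵥ W.mulVec (q k) = ω := by
    intro k
    have hdk : (0:ℝ) < d k := hdpos k
    rw [hW, hq]
    simp only [Matrix.add_mulVec, Matrix.smul_mulVec, dotProduct_add, dotProduct_smul,
      Matrix.mulVec_smul, Matrix.diagonal_mulVec_single, Matrix.mulVec_single, smul_eq_mul,
      dotProduct_single, smul_dotProduct, Pi.smul_apply, single_dotProduct, Pi.single_eq_same,
      MulOpposite.op_one, one_smul, Matrix.col_apply,
      Matrix.add_apply, Matrix.smul_apply, Matrix.diagonal_apply_eq,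
      mul_one, hHhollow k, mul_zero, zero_add, one_mul]
    rw [← mul_assoc, ← Real.rpow_add hdk, mul_comm ω, ← mul_assoc, ← Real.rpow_add hdk,
      show t + t + -(2 * t) = 0 by ring, Real.rpow_zero, one_mul]
  have swap : ∀ k : Fin n, q k ⬝ᵥ W.mulVec (p u) = p u ⬝ᵥ W.mulVec (q k) := by
    intro k
    rw [Matrix.dotProduct_mulVec, ← Matrix.mulVec_transpose, hWsymm.eq, dotProduct_comm]
  have expand : ∀ k : Fin n, dsq (p u) (q k) =
      p u ⬝ᵥ W.mulVec (p u) - 2 * (p u ⬝ᵥ W.mulVec (q k)) + q k ⬝ᵥ W.mulVec (q k) := by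
    intro k
    rw [hdsq]
    simp only [Matrix.mulVec_sub, dotProduct_sub, sub_dotProduct, swap k]
    ring
  constructor
  · rw [expand i, expand j, cross i hui, cross j huj, diag i, diag j]; ring
  · intro ht
    rw [expand i, expand j, cross i hui, cross j huj, diag i, diag j, ht]
    simp [Real.rpow_zero]
    ring
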